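/- Let K be an absorptive, fully-continuous commutative semiring with a^∞ = inf_{n ∈ ℕ} a^n. Then (a·b)^∞ = a^∞ · b^∞ for all a, b ∈ K. -/

import Mathlib

/-- In an absorptive, fully-continuous commutative semiring,
`(a*b)^∞ = a^∞ * b^∞`. -/
theorem infinitary_power_mul {K : Type*} [CommSemiring K] [CompleteLattice K]
    (hle : ∀ a b : K, a ≤ b ↔ a + b = b)
    (habs : ∀ a b : K, a + a * b = a)
    (hsup_add : ∀ (a : K) (C : Set K), C.Nonempty → IsChain (· ≤ ·) C →
      sSup ((a + ·) '' C) = a + sSup C)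
    (hinf_add : ∀ (a : K) (C : Set K), C.Nonempty → IsChain (· ≤ ·) C →
      sInf ((a + ·) '' C) = a + sInf C)
    (hsup_mul : ∀ (a : K) (C : Set K), C.Nonempty → IsChain (· ≤ ·) C →
      sSup ((a * ·) '' C) = a * sSup C)
    (hinf_mul : ∀ (a : K) (C : Set K), C.Nonempty → IsChain (· ≤ ·) C →
      sInf ((a * ·) '' C) = a * sInf C)
    (a b : K) : (⨅ n : ℕ, (a * b) ^ n) = (⨅ n : ℕ, a ^ n) * (⨅ n : ℕ, b ^ n) := by
  -- multiplication is monotone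
  have hmul : ∀ c x y : K, x ≤ y → c * x ≤ c * y := by
    intro c x y h
    rw [hle] at h ⊢
    rw [← mul_add, h]
  -- powers are antitone
  have hanti : ∀ c : K, Antitone (fun n : ℕ => c ^ n) := by
    intro c
    apply antitone_nat_of_succ_le
    intro n
    rw [hle, add_comm, pow_succ]
    exact habs _ _
  -- ranges of powers are chains
  have hchain : ∀ c : K, IsChain (· ≤ ·) (Set.range fun n : ℕ => c ^ n) := by
    intro c
    rintro _ ⟨n, rfl⟩ _ ⟨m, rfl⟩ _
    rcases le_total n m with h | h
    · right; exact hanti c h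
    · left; exact hanti c h
  -- key continuity fact
  have key : ∀ (c x : K), x * (⨅ n : ℕ, c ^ n) = ⨅ n : ℕ, x * c ^ n := by
    intro c x
    have h := hinf_mul x (Set.range fun n : ℕ => c ^ n) ⟨c ^ 0, 0, rfl⟩ (hchain c)
    rw [← Set.range_comp] at h
    simpa [iInf, Function.comp_def] using h.symm
  calc (⨅ n : ℕ, (a * b) ^ n) = ⨅ n : ℕ, a ^ n * b ^ n := by
        simp [mul_pow]
    _ = ⨅ n : ℕ, ⨅ m : ℕ, a ^ n * b ^ m := by
        apply le_antisymm
        · refine le_iInf fun n => le_iInf fun m => ?_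
          refine le_trans (iInf_le _ (max n m)) ?_
          calc a ^ max n m * b ^ max n m ≤ a ^ max n m * b ^ m :=
                hmul _ _ _ (hanti b (le_max_right n m))
            _ = b ^ m * a ^ max n m := mul_comm _ _
            _ ≤ b ^ m * a ^ n := hmul _ _ _ (hanti a (le_max_left n m))
            _ = a ^ n * b ^ m := mul_comm _ _
        · refine le_iInf fun n => le_trans (iInf_le _ n) (iInf_le _ n)
    _ = ⨅ n : ℕ, a ^ n * (⨅ m : ℕ, b ^ m) := by
        refine iInf_congr fun n => ?_
        rw [key]
    _ = (⨅ n : ℕ, a ^ n) * (⨅ m : ℕ, b ^ m) := by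
        rw [mul_comm]
        rw [key]
        exact iInf_congr fun n => mul_comm _ _
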